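/- Let (v, i) be a pivot such that v has a left child v.L in CT(P) and mfi(v,i) = [ℓ, r] ≠ [-∞,∞]. Then there exists an index j with ℓ ≤ j ≤ i-1 such that T[i] < T[j], R(v.L, j) < i, and ℓ ≤ L(v.L, j); in particular, mfi(v.L, j) ≠ [-∞,∞]. -/

import Mathlib

/-- Ordered binary trees (possibly empty). -/
inductive BTree : Type
  | nil : BTree
  | node : BTree → BTree → BTree
  deriving DecidableEq

/-- The minimum value of a list of integers (with default `0` for the empty list). -/
noncomputable def minval (l : List ℤ) : ℤ := l.minimum.untopD 0

/-- The 0-based index of the leftmost occurrence of the minimum value. -/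
noncomputable def minidx0 (l : List ℤ) : ℕ := l.idxOf (minval l)

theorem minidx0_lt_length {l : List ℤ} (h : l ≠ []) : minidx0 l < l.length := by
  obtain ⟨a, ha⟩ := WithTop.ne_top_iff_exists.mp (List.minimum_ne_top_of_ne_nil h)
  have hmem : a ∈ l := List.minimum_mem ha.symm
  have hval : minval l = a := by simp [minval, ← ha]
  rw [minidx0, hval]
  exact List.idxOf_lt_length_iff.mpr hmem

/-- The Cartesian tree of a string of integers. -/
noncomputable def CT (l : List ℤ) : BTree :=
  if h : l = [] then .nil
  else .node (CT (l.take (minidx0 l))) (CT (l.drop (minidx0 l + 1)))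
termination_by l.length
decreasing_by
  · have := minidx0_lt_length h
    simp [List.length_take]
    omega
  · have : 0 < l.length := List.length_pos_iff.mpr h
    simp [List.length_drop]
    omega

/-- The value of the 1-based position `i` of the string `T` (default `0`). -/
def val (T : List ℤ) (i : ℕ) : ℤ := T.getD (i - 1) 0

/-- `IsSubSeq n m I` : `I` is a strictly increasing sequence of `m` subscripts in `[1, n]`. -/
def IsSubSeq (n m : ℕ) (I : List ℕ) : Prop :=
  I.length = m ∧ I.Pairwise (· < ·) ∧ ∀ j ∈ I, 1 ≤ j ∧ j ≤ n

/-- The subsequence `T_I` of `T` selected by the (1-based) subscript sequence `I`. -/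
def seqAt (T : List ℤ) (I : List ℕ) : List ℤ := I.map (val T)

/-- The substring `P[a..b]` of `P` (1-based, inclusive). -/
def subslice (P : List ℤ) (a b : ℕ) : List ℤ := (P.take b).drop (a - 1)

/-- The left end of the maximal interval around position `v` in which `P[v]` is minimal:
one plus the rightmost position `j < v` carrying a value smaller than `P[v]` (or `1`). -/
def leftEnd (P : List ℤ) (v : ℕ) : ℕ :=
  (((Finset.Icc 1 (v - 1)).filter (fun j => val P j < val P v)).max.unbotD 0) + 1

/-- The right end of the maximal interval around position `v` in which `P[v]` is minimal:
the leftmost position `j > v` carrying a value smaller than `P[v]`, minus one (or `|P|`). -/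
def rightEnd (P : List ℤ) (v : ℕ) : ℕ :=
  (((Finset.Icc (v + 1) P.length).filter (fun j => val P j < val P v)).min.untopD
    (P.length + 1)) - 1

/-- `P_v`: the substring of `P` spanned by the subtree of `CT(P)` rooted at node `v`
(nodes are identified with 1-based positions of `P`). -/
def Psub (P : List ℤ) (v : ℕ) : List ℤ := subslice P (leftEnd P v) (rightEnd P v)

/-- The left child `v.L` of node `v` in `CT(P)` (as a 1-based position), if it exists. -/
noncomputable def leftChild (P : List ℤ) (v : ℕ) : Option ℕ :=
  if leftEnd P v < v then some (leftEnd P v + minidx0 (subslice P (leftEnd P v) (v - 1)))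
  else none

/-- The right child `v.R` of node `v` in `CT(P)` (as a 1-based position), if it exists. -/
noncomputable def rightChild (P : List ℤ) (v : ℕ) : Option ℕ :=
  if v < rightEnd P v then some (v + 1 + minidx0 (subslice P (v + 1) (rightEnd P v)))
  else none

/-- `[ℓ, r]` is a fixed-interval with pivot `(v, i)`. -/
def IsFixedInterval (T P : List ℤ) (v i ℓ r : ℕ) : Prop :=
  1 ≤ ℓ ∧ r ≤ T.length ∧
    ∃ I : List ℕ, IsSubSeq T.length (Psub P v).length I ∧ i ∈ I ∧
      (∀ j ∈ I, ℓ ≤ j ∧ j ≤ r) ∧ CT (seqAt T I) = CT (Psub P v) ∧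
      val T i = minval (seqAt T I)

/-- `IntervalSsubset (ℓ', r') (ℓ, r)` : the interval `[ℓ', r']` is strictly contained
in the interval `[ℓ, r]`. -/
def IntervalSsubset (p q : ℕ × ℕ) : Prop := q.1 ≤ p.1 ∧ p.2 ≤ q.2 ∧ p ≠ q

/-- `[ℓ, r]` is a minimal fixed-interval with pivot `(v, i)`. -/
def IsMinFixedInterval (T P : List ℤ) (v i ℓ r : ℕ) : Prop :=
  IsFixedInterval T P v i ℓ r ∧
    ¬∃ ℓ' r', IsFixedInterval T P v i ℓ' r' ∧ IntervalSsubset (ℓ', r') (ℓ, r)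

open Classical in
/-- The left endpoint `L(v, i)` of the minimal fixed-interval `mfi(v, i)`,
which is `-∞` (i.e. `⊥`) if no (minimal) fixed-interval with pivot `(v, i)` exists. -/
noncomputable def mfiL (T P : List ℤ) (v i : ℕ) : WithBot ℕ :=
  if h : ∃ ℓ r, IsMinFixedInterval T P v i ℓ r then (h.choose : WithBot ℕ) else ⊥

open Classical in
/-- The right endpoint `R(v, i)` of the minimal fixed-interval `mfi(v, i)`,
which is `∞` (i.e. `⊤`) if no (minimal) fixed-interval with pivot `(v, i)` exists. -/
noncomputable def mfiR (T P : List ℤ) (v i : ℕ) : WithTop ℕ :=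
  if h : ∃ ℓ r, IsMinFixedInterval T P v i ℓ r then (h.choose_spec.choose : WithTop ℕ) else ⊤

/-- `I` is a trace of pattern `P` in text `T`. -/
def IsTrace (T P : List ℤ) (I : List ℕ) : Prop :=
  IsSubSeq T.length P.length I ∧ CT (seqAt T I) = CT P

/-- `[ℓ, r]` is an occurrence interval for `P` over `T`. -/
def IsOccInterval (T P : List ℤ) (ℓ r : ℕ) : Prop :=
  1 ≤ ℓ ∧ r ≤ T.length ∧ ∃ I, IsTrace T P I ∧ ∀ j ∈ I, ℓ ≤ j ∧ j ≤ r

/-- `[ℓ, r]` is a minimal occurrence interval for `P` over `T`. -/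
def IsMinOccInterval (T P : List ℤ) (ℓ r : ℕ) : Prop :=
  IsOccInterval T P ℓ r ∧
    ¬∃ ℓ' r', IsOccInterval T P ℓ' r' ∧ IntervalSsubset (ℓ', r') (ℓ, r)

section Helpers

open List

lemma minimum_eq_minval {l : List ℤ} (h : l ≠ []) : l.minimum = (minval l : WithTop ℤ) := by
  obtain ⟨a, ha⟩ := WithTop.ne_top_iff_exists.mp (List.minimum_ne_top_of_ne_nil h)
  have hv : minval l = a := by simp [minval, ← ha]
  rw [hv, ha]

lemma minval_mem {l : List ℤ} (h : l ≠ []) : minval l ∈ l :=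
  List.minimum_mem (minimum_eq_minval h)

lemma minval_le {l : List ℤ} {a : ℤ} (ha : a ∈ l) : minval l ≤ a := by
  have h1 := List.minimum_le_of_mem' ha
  rw [minimum_eq_minval (List.ne_nil_of_mem ha)] at h1
  exact_mod_cast h1

lemma minval_eq_of_mem {l : List ℤ} {a : ℤ} (ha : a ∈ l) (hle : ∀ b ∈ l, a ≤ b) :
    minval l = a := by
  have h : l.minimum = (a : WithTop ℤ) := List.minimum_eq_coe_iff.mpr ⟨ha, hle⟩
  simp [minval, h]

lemma minidx0_eq_of {l : List ℤ} {m : ℕ} (hnd : l.Nodup) (hm : m < l.length)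
    (hmin : minval l = l[m]) : minidx0 l = m := by
  have hne : l ≠ [] := by intro h; subst h; simp at hm
  have h1 : List.idxOf (minval l) l < l.length :=
    List.idxOf_lt_length_iff.mpr (minval_mem hne)
  have h2 : l[List.idxOf (minval l) l]'h1 = l[m]'hm := by
    rw [← hmin]
    simpa using List.idxOf_get h1
  exact hnd.getElem_inj_iff.mp h2

lemma getElem_minidx0 {l : List ℤ} (h : l ≠ []) :
    l[minidx0 l]'(minidx0_lt_length h) = minval l := by
  have h1 : List.idxOf (minval l) l < l.length :=
    List.idxOf_lt_length_iff.mpr (minval_mem h)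
  simpa [minidx0] using List.idxOf_get h1

lemma CT_nil_iff {l : List ℤ} : CT l = .nil ↔ l = [] := by
  constructor
  · intro h
    by_contra hne
    rw [CT] at h
    simp [hne] at h
  · intro h; subst h; rw [CT]; simp

lemma CT_eq_node {l : List ℤ} (h : l ≠ []) :
    CT l = .node (CT (l.take (minidx0 l))) (CT (l.drop (minidx0 l + 1))) := by
  rw [CT]; simp [h]

def bsize : BTree → ℕ
  | .nil => 0
  | .node a b => bsize a + bsize b + 1

theorem bsize_CT (l : List ℤ) : bsize (CT l) = l.length := by
  generalize hn : l.length = n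
  induction n using Nat.strong_induction_on generalizing l with
  | _ n ih =>
    subst hn
    by_cases h : l = []
    · subst h; rw [CT]; simp [bsize]
    · rw [CT_eq_node h]
      have h3 := minidx0_lt_length h
      have h1 := ih (l.take (minidx0 l)).length (by simp [List.length_take]; omega) _ rfl
      have h2 := ih (l.drop (minidx0 l + 1)).length (by simp [List.length_drop]; omega) _ rfl
      simp only [bsize, h1, h2, List.length_take, List.length_drop]
      omega

lemma length_eq_of_CT_eq {l1 l2 : List ℤ} (h : CT l1 = CT l2) : l1.length = l2.length := by
  rw [← bsize_CT l1, ← bsize_CT l2, h]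

lemma val_eq_getElem {T : List ℤ} {x : ℕ} (h1 : 1 ≤ x) (h2 : x ≤ T.length) :
    val T x = T[x - 1]'(by omega) := List.getD_eq_getElem _ _ _

lemma val_inj {T : List ℤ} (hT : T.Nodup) {x y : ℕ} (hx1 : 1 ≤ x) (hx2 : x ≤ T.length)
    (hy1 : 1 ≤ y) (hy2 : y ≤ T.length) (hxy : x ≠ y) : val T x ≠ val T y := by
  rw [val_eq_getElem hx1 hx2, val_eq_getElem hy1 hy2]
  intro hcon
  have := hT.getElem_inj_iff.mp hcon
  omega

lemma seqAt_length (T : List ℤ) (I : List ℕ) : (seqAt T I).length = I.length :=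
  List.length_map _

lemma seqAt_nodup {T : List ℤ} (hT : T.Nodup) {I : List ℕ} (hs : I.Pairwise (· < ·))
    (hb : ∀ j ∈ I, 1 ≤ j ∧ j ≤ T.length) : (seqAt T I).Nodup := by
  apply List.Nodup.map_on ?_ hs.nodup
  intro x hx y hy hxy
  by_contra hne
  exact val_inj hT (hb x hx).1 (hb x hx).2 (hb y hy).1 (hb y hy).2 hne hxy

end Helpers
section Helpers2

lemma subslice_length {P : List ℤ} {a b : ℕ} (hb : b ≤ P.length) :
    (subslice P a b).length = b - (a - 1) := by
  simp [subslice]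
  omega

lemma subslice_getElem {P : List ℤ} {a b : ℕ} (ha : 1 ≤ a) (hb : b ≤ P.length) {t : ℕ}
    (ht : t < (subslice P a b).length) : (subslice P a b)[t] = val P (a + t) := by
  have hlen : (subslice P a b).length = b - (a - 1) := subslice_length hb
  have htb : a - 1 + t < b := by omega
  have htP : a - 1 + t < P.length := by omega
  have h1 : (subslice P a b)[t] = P[a - 1 + t] := by
    simp [subslice, List.getElem_drop, List.getElem_take]
  rw [h1, val]
  rw [List.getD_eq_getElem P 0 (by omega : a + t - 1 < P.length)]
  congr 1
  omega

lemma subslice_sublist {P : List ℤ} {a b : ℕ} : (subslice P a b).Sublist P :=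
  (List.drop_sublist _ _).trans (List.take_sublist _ _)

lemma leftEnd_pos {P : List ℤ} {v : ℕ} : 1 ≤ leftEnd P v := Nat.le_add_left 1 _

lemma leftEnd_le {P : List ℤ} {v : ℕ} (hv1 : 1 ≤ v) : leftEnd P v ≤ v := by
  rw [leftEnd]
  rcases hmax : ((Finset.Icc 1 (v - 1)).filter (fun j => val P j < val P v)).max with _ | m
  · exact (show (0:ℕ) + 1 ≤ v by omega)
  · have hm := Finset.mem_of_max hmax
    simp only [Finset.mem_filter, Finset.mem_Icc] at hm
    have he : WithBot.unbotD 0 (some m) = m := rfl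
    rw [he]
    omega

lemma val_lt_left {P : List ℤ} {v : ℕ} (hP : P.Nodup) (hv2 : v ≤ P.length) {j : ℕ}
    (h1 : leftEnd P v ≤ j) (h2 : j ≤ v - 1) : val P v < val P j := by
  have hj1 : 1 ≤ j := le_trans leftEnd_pos h1
  have hjv : j < v := by omega
  have hns : ¬ val P j < val P v := by
    intro hlt
    have hjs : j ∈ (Finset.Icc 1 (v - 1)).filter (fun j => val P j < val P v) := by
      simp only [Finset.mem_filter, Finset.mem_Icc]
      exact ⟨⟨hj1, h2⟩, hlt⟩
    have hle := Finset.le_max hjs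
    rcases hmax : ((Finset.Icc 1 (v - 1)).filter (fun j => val P j < val P v)).max with _ | m
    · rw [hmax] at hle
      have h2 : (j : WithBot ℕ) ≤ ⊥ := hle
      simp at h2
    · rw [hmax] at hle
      have hjm : j ≤ m := WithBot.coe_le_coe.mp hle
      have : leftEnd P v = m + 1 := by
        rw [leftEnd, hmax]
        rfl
      omega
  have hne : val P v ≠ val P j :=
    val_inj hP (by omega) hv2 hj1 (by omega) (by omega)
  exact lt_of_le_of_ne (not_lt.mp hns) hne

lemma val_leftEnd_pred {P : List ℤ} {v : ℕ} (h2 : 2 ≤ leftEnd P v) :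
    val P (leftEnd P v - 1) < val P v ∧ leftEnd P v - 1 ≤ v - 1 ∧ 1 ≤ leftEnd P v - 1 := by
  rcases hmax : ((Finset.Icc 1 (v - 1)).filter (fun j => val P j < val P v)).max with _ | m
  · rw [leftEnd, hmax] at h2
    have h3 : (2:ℕ) ≤ 0 + 1 := h2
    omega
  · have hm := Finset.mem_of_max hmax
    simp only [Finset.mem_filter, Finset.mem_Icc] at hm
    have hle : leftEnd P v = m + 1 := by
      rw [leftEnd, hmax]
      rfl
    rw [hle]
    simp only [Nat.add_sub_cancel]
    exact ⟨hm.2, hm.1.2, hm.1.1⟩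

lemma rightEnd_ge {P : List ℤ} {v : ℕ} (hv2 : v ≤ P.length) : v ≤ rightEnd P v := by
  rw [rightEnd]
  rcases hmin : ((Finset.Icc (v + 1) P.length).filter (fun j => val P j < val P v)).min with _ | m
  · exact (show v ≤ P.length + 1 - 1 by omega)
  · have hm := Finset.mem_of_min hmin
    simp only [Finset.mem_filter, Finset.mem_Icc] at hm
    have he : WithTop.untopD (P.length + 1) (some m) = m := rfl
    rw [he]
    omega

lemma rightEnd_le {P : List ℤ} {v : ℕ} : rightEnd P v ≤ P.length := by
  rw [rightEnd]
  rcases hmin : ((Finset.Icc (v + 1) P.length).filter (fun j => val P j < val P v)).min with _ | m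
  · have he : WithTop.untopD (P.length + 1) (none : WithTop ℕ) = P.length + 1 := rfl
    rw [he]
    omega
  · have hm := Finset.mem_of_min hmin
    simp only [Finset.mem_filter, Finset.mem_Icc] at hm
    have he : WithTop.untopD (P.length + 1) (some m) = m := rfl
    rw [he]
    omega

lemma val_lt_right {P : List ℤ} {v : ℕ} (hP : P.Nodup) (hv1 : 1 ≤ v) (hv2 : v ≤ P.length)
    {j : ℕ} (h1 : v + 1 ≤ j) (h2 : j ≤ rightEnd P v) : val P v < val P j := by
  have hjP : j ≤ P.length := le_trans h2 rightEnd_le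
  have hns : ¬ val P j < val P v := by
    intro hlt
    have hjs : j ∈ (Finset.Icc (v + 1) P.length).filter (fun j => val P j < val P v) := by
      simp only [Finset.mem_filter, Finset.mem_Icc]
      exact ⟨⟨h1, hjP⟩, hlt⟩
    have hle := Finset.min_le hjs
    rcases hmin : ((Finset.Icc (v + 1) P.length).filter (fun j => val P j < val P v)).min with _ | m
    · rw [hmin] at hle
      have h3 : (⊤ : WithTop ℕ) ≤ (j : WithTop ℕ) := hle
      simp at h3
    · rw [hmin] at hle
      have hjm : m ≤ j := WithTop.coe_le_coe.mp hle
      have hre : rightEnd P v = m - 1 := by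
        rw [rightEnd, hmin]
        rfl
      have hm := Finset.mem_of_min hmin
      simp only [Finset.mem_filter, Finset.mem_Icc] at hm
      omega
  have hne : val P v ≠ val P j :=
    val_inj hP hv1 hv2 (by omega) hjP (by omega)
  exact lt_of_le_of_ne (not_lt.mp hns) hne

lemma leftEnd_eq {P : List ℤ} {u c : ℕ} (hc : 1 ≤ c) (hcu : c ≤ u)
    (hsmall : 2 ≤ c → val P (c - 1) < val P u)
    (hbig : ∀ x, c ≤ x → x ≤ u - 1 → val P u < val P x) : leftEnd P u = c := by
  have hclaim : ∀ x ∈ (Finset.Icc 1 (u - 1)).filter (fun j => val P j < val P u), x ≤ c - 1 := by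
    intro x hx
    simp only [Finset.mem_filter, Finset.mem_Icc] at hx
    by_contra hxc
    have hcx : c ≤ x := by omega
    exact absurd hx.2 (not_lt.mpr (le_of_lt (hbig x hcx hx.1.2)))
  rcases Nat.lt_or_ge c 2 with hc1 | hc2
  · have hc1 : c = 1 := by omega
    subst hc1
    have hempty : (Finset.Icc 1 (u - 1)).filter (fun j => val P j < val P u) = ∅ := by
      apply Finset.eq_empty_of_forall_notMem
      intro x hx
      have h1 := hclaim x hx
      simp only [Finset.mem_filter, Finset.mem_Icc] at hx
      omega
    rw [leftEnd, hempty]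
    simp
  · have hmem : c - 1 ∈ (Finset.Icc 1 (u - 1)).filter (fun j => val P j < val P u) := by
      simp only [Finset.mem_filter, Finset.mem_Icc]
      exact ⟨⟨by omega, by omega⟩, hsmall hc2⟩
    have hmax : ((Finset.Icc 1 (u - 1)).filter (fun j => val P j < val P u)).max
        = ((c - 1 : ℕ) : WithBot ℕ) := by
      apply le_antisymm
      · apply Finset.max_le
        intro x hx
        exact WithBot.coe_le_coe.mpr (hclaim x hx)
      · exact Finset.le_max hmem
    rw [leftEnd, hmax]
    have he : WithBot.unbotD 0 ((c - 1 : ℕ) : WithBot ℕ) = c - 1 := rfl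
    rw [he]
    omega

lemma rightEnd_eq {P : List ℤ} {u d : ℕ} (hud : u ≤ d) (hd : d ≤ P.length)
    (hsmall : d < P.length → val P (d + 1) < val P u)
    (hbig : ∀ x, u + 1 ≤ x → x ≤ d → val P u < val P x) : rightEnd P u = d := by
  have hclaim : ∀ x ∈ (Finset.Icc (u + 1) P.length).filter (fun j => val P j < val P u),
      d + 1 ≤ x := by
    intro x hx
    simp only [Finset.mem_filter, Finset.mem_Icc] at hx
    by_contra hxd
    have hxd' : x ≤ d := by omega
    exact absurd hx.2 (not_lt.mpr (le_of_lt (hbig x hx.1.1 hxd')))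
  rcases Nat.lt_or_ge d P.length with hdP | hdP
  · have hmem : d + 1 ∈ (Finset.Icc (u + 1) P.length).filter (fun j => val P j < val P u) := by
      simp only [Finset.mem_filter, Finset.mem_Icc]
      exact ⟨⟨by omega, by omega⟩, hsmall hdP⟩
    have hmin : ((Finset.Icc (u + 1) P.length).filter (fun j => val P j < val P u)).min
        = ((d + 1 : ℕ) : WithTop ℕ) := by
      apply le_antisymm
      · exact Finset.min_le hmem
      · apply Finset.le_min
        intro x hx
        exact WithTop.coe_le_coe.mpr (hclaim x hx)
    rw [rightEnd, hmin]
    rfl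
  · have hdP : d = P.length := by omega
    subst hdP
    have hempty : (Finset.Icc (u + 1) P.length).filter (fun j => val P j < val P u) = ∅ := by
      apply Finset.eq_empty_of_forall_notMem
      intro x hx
      have h1 := hclaim x hx
      simp only [Finset.mem_filter, Finset.mem_Icc] at hx
      omega
    rw [rightEnd, hempty]
    simp

end Helpers2
section Helpers3

lemma Pside {P : List ℤ} {v u : ℕ} (hP : P.Nodup) (hv1 : 1 ≤ v) (hv2 : v ≤ P.length)
    (hu : leftChild P v = some u) :
    1 ≤ (Psub P u).length ∧ ∃ Y, CT (Psub P v) = .node (CT (Psub P u)) Y := by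
  rw [leftChild] at hu
  by_cases hlt : leftEnd P v < v
  · rw [if_pos hlt] at hu
    have hu' : u = leftEnd P v + minidx0 (subslice P (leftEnd P v) (v - 1)) :=
      (Option.some.inj hu).symm
    set a := leftEnd P v with ha
    have ha1 : 1 ≤ a := leftEnd_pos
    have hSlen : (subslice P a (v - 1)).length = v - a := by
      rw [subslice_length (by omega)]
      omega
    have hSne : subslice P a (v - 1) ≠ [] := by
      intro hcon
      rw [hcon] at hSlen
      simp at hSlen
      omega
    have hmid : minidx0 (subslice P a (v - 1)) < v - a := by
      rw [← hSlen]; exact minidx0_lt_length hSne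
    have hu1 : a ≤ u := by omega
    have hu2 : u ≤ v - 1 := by omega
    have huP : u ≤ P.length := by omega
    have hSu : (subslice P a (v - 1))[minidx0 (subslice P a (v - 1))]'(minidx0_lt_length hSne)
        = val P u := by
      rw [subslice_getElem ha1 (by omega)]
      congr 1
      omega
    have humin : val P u = minval (subslice P a (v - 1)) := by
      rw [← hSu, getElem_minidx0 hSne]
    have hbig : ∀ t, a ≤ t → t ≤ v - 1 → t ≠ u → val P u < val P t := by
      intro t h1 h2 h3
      have ht' : t - a < (subslice P a (v - 1)).length := by omega
      have hget := subslice_getElem ha1 (by omega : v - 1 ≤ P.length) ht'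
      rw [show a + (t - a) = t by omega] at hget
      have htS : val P t ∈ subslice P a (v - 1) := by
        rw [← hget]
        exact List.getElem_mem _
      have hle := minval_le htS
      rw [← humin] at hle
      exact lt_of_le_of_ne hle
        (val_inj hP (by omega) huP (by omega) (by omega) (Ne.symm h3))
    have hvu : val P v < val P u := val_lt_left hP hv2 hu1 hu2
    have hLu : leftEnd P u = a := by
      apply leftEnd_eq ha1 hu1
      · intro hc2
        have hps := val_leftEnd_pred (P := P) (v := v) (by omega)
        exact lt_trans hps.1 hvu
      · intro x hx1 hx2
        exact hbig x hx1 (by omega) (by omega)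
    have hRu : rightEnd P u = v - 1 := by
      apply rightEnd_eq (by omega) (by omega)
      · intro _
        rw [show v - 1 + 1 = v by omega]
        exact hvu
      · intro x hx1 hx2
        exact hbig x (by omega) hx2 (by omega)
    have hPsubu : Psub P u = subslice P a (v - 1) := by rw [Psub, hLu, hRu]
    have hrv : v ≤ rightEnd P v := rightEnd_ge hv2
    have hrvP : rightEnd P v ≤ P.length := rightEnd_le
    have hQlen : (Psub P v).length = rightEnd P v - a + 1 := by
      rw [Psub, subslice_length hrvP]
      omega
    have hQne : Psub P v ≠ [] := by
      intro hcon
      rw [hcon] at hQlen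
      simp at hQlen
    have hQnd : (Psub P v).Nodup := subslice_sublist.nodup hP
    have hQget : ∀ t (ht : t < (Psub P v).length), (Psub P v)[t] = val P (a + t) := by
      intro t ht
      rw [Psub] at ht
      exact subslice_getElem ha1 hrvP ht
    have hQv : (Psub P v)[v - a]'(by omega) = val P v := by
      rw [hQget (v - a) (by omega)]
      congr 1
      omega
    have hQmin : minval (Psub P v) = val P v := by
      apply minval_eq_of_mem
      · rw [← hQv]
        exact List.getElem_mem _
      · intro b hb
        obtain ⟨t, ht, rfl⟩ := List.mem_iff_getElem.mp hb
        rw [hQget t ht]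
        rcases Nat.lt_trichotomy (a + t) v with hc | hc | hc
        · exact le_of_lt (val_lt_left hP hv2 (by omega) (by omega))
        · rw [hc]
        · exact le_of_lt (val_lt_right hP hv1 hv2 (by omega) (by omega))
    have hQidx : minidx0 (Psub P v) = v - a :=
      minidx0_eq_of hQnd (by omega) (by rw [hQv]; exact hQmin)
    have htake : (Psub P v).take (v - a) = subslice P a (v - 1) := by
      rw [Psub, subslice, subslice, List.drop_take, List.drop_take, List.take_take]
      congr 1
      omega
    refine ⟨?_, CT ((Psub P v).drop (v - a + 1)), ?_⟩
    · rw [hPsubu, hSlen]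
      omega
    · rw [CT_eq_node hQne, hQidx, htake, hPsubu]
  · rw [if_neg hlt] at hu
    exact absurd hu (by simp)

end Helpers3
section Helpers4

lemma seqAt_split {T : List ℤ} (hT : T.Nodup) {I : List ℕ} {a : ℕ} (hs : I.Pairwise (· < ·))
    (hb : ∀ j ∈ I, 1 ≤ j ∧ j ≤ T.length) (ha : a ∈ I)
    (hmin : val T a = minval (seqAt T I)) :
    CT (seqAt T I) =
      .node (CT (seqAt T (I.take (I.idxOf a)))) (CT (seqAt T (I.drop (I.idxOf a + 1)))) ∧
    (∀ x ∈ I.take (I.idxOf a), x < a) ∧ (∀ x ∈ I.drop (I.idxOf a + 1), a < x) := by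
  set k := I.idxOf a with hk
  have hkl : k < I.length := List.idxOf_lt_length_iff.mpr ha
  have hIk : I[k] = a := by
    have h0 := List.idxOf_get hkl
    rwa [List.get_eq_getElem] at h0
  have hne : seqAt T I ≠ [] := by
    simp only [seqAt, ne_eq, List.map_eq_nil_iff]
    exact List.ne_nil_of_mem ha
  have hnd := seqAt_nodup hT hs hb
  have hklen : k < (seqAt T I).length := by rw [seqAt_length]; exact hkl
  have hval : (seqAt T I)[k]'hklen = val T a := by
    simp [seqAt, hIk]
  have hm : minidx0 (seqAt T I) = k :=
    minidx0_eq_of hnd hklen (by rw [hval, hmin])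
  have hdropk : I.drop k = a :: I.drop (k + 1) := by
    rw [List.drop_eq_getElem_cons hkl, hIk]
  have hs' : List.Pairwise (· < ·) (I.take k ++ I.drop k) := by
    rw [List.take_append_drop]
    exact hs
  obtain ⟨hp1, hp2, hp3⟩ := List.pairwise_append.mp hs'
  refine ⟨?_, ?_, ?_⟩
  · rw [CT_eq_node hne, hm]
    congr 1
    · rw [seqAt, seqAt, List.map_take]
    · rw [seqAt, seqAt, List.map_drop]
  · intro x hx
    exact hp3 x hx a (by rw [hdropk]; exact List.mem_cons_self)
  · rw [hdropk] at hp2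
    exact fun y hy => (List.pairwise_cons.mp hp2).1 y hy

lemma fixed_merge {T P : List ℤ} (hT : T.Nodup) {w a ℓ1 r1 ℓ2 r2 : ℕ}
    (h1 : IsFixedInterval T P w a ℓ1 r1) (h2 : IsFixedInterval T P w a ℓ2 r2) :
    IsFixedInterval T P w a ℓ2 r1 := by
  obtain ⟨hl1, hr1, I1, ⟨hlen1, hs1, hb1⟩, ha1, hbnd1, hct1, hv1⟩ := h1
  obtain ⟨hl2, hr2, I2, ⟨hlen2, hs2, hb2⟩, ha2, hbnd2, hct2, hv2⟩ := h2
  obtain ⟨hdec1, hlt1, hgt1⟩ := seqAt_split hT hs1 hb1 ha1 hv1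
  obtain ⟨hdec2, hlt2, hgt2⟩ := seqAt_split hT hs2 hb2 ha2 hv2
  set k1 := I1.idxOf a with hk1
  set k2 := I2.idxOf a with hk2
  have hk1l : k1 < I1.length := List.idxOf_lt_length_iff.mpr ha1
  have hk2l : k2 < I2.length := List.idxOf_lt_length_iff.mpr ha2
  have hnode : BTree.node (CT (seqAt T (I1.take k1))) (CT (seqAt T (I1.drop (k1 + 1))))
      = BTree.node (CT (seqAt T (I2.take k2))) (CT (seqAt T (I2.drop (k2 + 1)))) := by
    rw [← hdec1, ← hdec2, hct1, hct2]
  have hC : CT (seqAt T (I1.take k1)) = CT (seqAt T (I2.take k2)) :=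
    (BTree.node.injEq _ _ _ _ ▸ hnode).1
  have hD : CT (seqAt T (I1.drop (k1 + 1))) = CT (seqAt T (I2.drop (k2 + 1))) :=
    (BTree.node.injEq _ _ _ _ ▸ hnode).2
  have hkk : k1 = k2 := by
    have := length_eq_of_CT_eq hC
    rw [seqAt_length, seqAt_length, List.length_take, List.length_take] at this
    omega
  set A := I2.take k2 with hA
  set B := I1.drop (k1 + 1) with hB
  set J := A ++ a :: B with hJ
  have hAmem : ∀ x ∈ A, x ∈ I2 := fun x hx => List.mem_of_mem_take hx
  have hBmem : ∀ x ∈ B, x ∈ I1 := fun x hx => List.mem_of_mem_drop hx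
  have hJb : ∀ x ∈ J, 1 ≤ x ∧ x ≤ T.length := by
    intro x hx
    rcases List.mem_append.mp hx with hx | hx
    · exact hb2 x (hAmem x hx)
    · rcases List.mem_cons.mp hx with hx | hx
      · subst hx; exact hb1 x ha1
      · exact hb1 x (hBmem x hx)
  have hJs : J.Pairwise (· < ·) := by
    rw [hJ]
    apply List.pairwise_append.mpr
    refine ⟨hs2.sublist (List.take_sublist _ _), ?_, ?_⟩
    · apply List.pairwise_cons.mpr
      exact ⟨hgt1, hs1.sublist (List.drop_sublist _ _)⟩
    · intro x hx y hy
      rcases List.mem_cons.mp hy with hy | hy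
      · subst hy; exact hlt2 x hx
      · exact lt_trans (hlt2 x hx) (hgt1 y hy)
  have hJlen : J.length = (Psub P w).length := by
    rw [hJ, hA, hB]
    simp only [List.length_append, List.length_cons, List.length_take, List.length_drop]
    omega
  have haJ : a ∈ J := by
    rw [hJ]
    exact List.mem_append_right _ (List.mem_cons_self)
  have hminJ : minval (seqAt T J) = val T a := by
    apply minval_eq_of_mem
    · rw [seqAt]
      exact List.mem_map.mpr ⟨a, haJ, rfl⟩
    · intro b hb
      obtain ⟨x, hx, rfl⟩ := List.mem_map.mp hb
      rcases List.mem_append.mp hx with hx | hx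
      · rw [hv2]
        exact minval_le (List.mem_map.mpr ⟨x, hAmem x hx, rfl⟩)
      · rcases List.mem_cons.mp hx with hx | hx
        · subst hx; exact le_refl _
        · rw [hv1]
          exact minval_le (List.mem_map.mpr ⟨x, hBmem x hx, rfl⟩)
  have hJne : seqAt T J ≠ [] := by
    simp only [seqAt, ne_eq, List.map_eq_nil_iff]
    exact List.ne_nil_of_mem haJ
  have hsJ : seqAt T J = seqAt T A ++ val T a :: seqAt T B := by
    rw [hJ, seqAt, List.map_append, List.map_cons]
    rfl
  have hAlen : (seqAt T A).length = k2 := by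
    rw [seqAt_length, hA, List.length_take]
    omega
  have hgetJ : (seqAt T J)[k2]'(by rw [hsJ]; simp [hAlen]) = val T a := by
    simp only [hsJ]
    rw [List.getElem_append_right (by rw [hAlen] : (seqAt T A).length ≤ k2)]
    simp [hAlen]
  have hidxJ : minidx0 (seqAt T J) = k2 := by
    apply minidx0_eq_of (seqAt_nodup hT hJs hJb) _ (by rw [hgetJ, hminJ])
  have htakeJ : (seqAt T J).take k2 = seqAt T A := by
    rw [hsJ, ← hAlen, List.take_left]
  have hdropJ : (seqAt T J).drop (k2 + 1) = seqAt T B := by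
    rw [hsJ]
    rw [show seqAt T A ++ val T a :: seqAt T B = (seqAt T A ++ [val T a]) ++ seqAt T B by simp]
    rw [show k2 + 1 = (seqAt T A ++ [val T a]).length by simp [hAlen]]
    exact List.drop_left
  have hctJ : CT (seqAt T J) = CT (Psub P w) := by
    rw [CT_eq_node hJne, hidxJ, htakeJ, hdropJ, hD, ← hct2, hdec2]
  have hbndJ : ∀ x ∈ J, ℓ2 ≤ x ∧ x ≤ r1 := by
    intro x hx
    have har1 : a ≤ r1 := (hbnd1 a ha1).2
    have hal2 : ℓ2 ≤ a := (hbnd2 a ha2).1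
    rcases List.mem_append.mp hx with hx | hx
    · exact ⟨(hbnd2 x (hAmem x hx)).1, le_trans (le_of_lt (hlt2 x hx)) har1⟩
    · rcases List.mem_cons.mp hx with hx | hx
      · subst hx; exact ⟨hal2, har1⟩
      · exact ⟨le_trans hal2 (le_of_lt (hgt1 x hx)), (hbnd1 x (hBmem x hx)).2⟩
  exact ⟨hl2, hr1, J, ⟨hJlen, hJs, hJb⟩, haJ, hbndJ, hctJ, hminJ.symm⟩

end Helpers4
section Helpers5

lemma fixed_elem_bounds {T P : List ℤ} {w a ℓ r : ℕ} (h : IsFixedInterval T P w a ℓ r) :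
    ℓ ≤ a ∧ a ≤ r ∧ 1 ≤ a ∧ a ≤ T.length := by
  obtain ⟨hl, hr, I, ⟨hlen, hs, hb⟩, ha, hbnd, _, _⟩ := h
  exact ⟨(hbnd a ha).1, (hbnd a ha).2, (hb a ha).1, (hb a ha).2⟩

lemma fixed_max_min {T P : List ℤ} (hT : T.Nodup) {w a ℓ1 r1 ℓ2 r2 : ℕ}
    (h1 : IsFixedInterval T P w a ℓ1 r1) (h2 : IsFixedInterval T P w a ℓ2 r2) :
    IsFixedInterval T P w a (max ℓ1 ℓ2) (min r1 r2) := by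
  rcases le_total ℓ1 ℓ2 with hl | hl <;> rcases le_total r1 r2 with hr | hr
  · rw [max_eq_right hl, min_eq_left hr]; exact fixed_merge hT h1 h2
  · rw [max_eq_right hl, min_eq_right hr]; exact h2
  · rw [max_eq_left hl, min_eq_left hr]; exact h1
  · rw [max_eq_left hl, min_eq_right hr]; exact fixed_merge hT h2 h1

lemma minfixed_unique {T P : List ℤ} (hT : T.Nodup) {w a ℓ1 r1 ℓ2 r2 : ℕ}
    (h1 : IsMinFixedInterval T P w a ℓ1 r1) (h2 : IsMinFixedInterval T P w a ℓ2 r2) :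
    ℓ1 = ℓ2 ∧ r1 = r2 := by
  have hF := fixed_max_min hT h1.1 h2.1
  have e1 : (max ℓ1 ℓ2, min r1 r2) = (ℓ1, r1) := by
    by_contra hne
    exact h1.2 ⟨max ℓ1 ℓ2, min r1 r2, hF, le_max_left _ _, min_le_left _ _, hne⟩
  have e2 : (max ℓ1 ℓ2, min r1 r2) = (ℓ2, r2) := by
    by_contra hne
    exact h2.2 ⟨max ℓ1 ℓ2, min r1 r2, hF, le_max_right _ _, min_le_right _ _, hne⟩
  rw [e2] at e1
  exact ⟨(Prod.ext_iff.mp e1).1.symm, (Prod.ext_iff.mp e1).2.symm⟩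

lemma exists_minfixed_of_fixed {T P : List ℤ} {w a : ℕ} :
    ∀ (k ℓ r : ℕ), r + (T.length - ℓ) ≤ k → IsFixedInterval T P w a ℓ r →
      ∃ ℓ' r', IsMinFixedInterval T P w a ℓ' r' ∧ ℓ ≤ ℓ' ∧ r' ≤ r := by
  intro k
  induction k with
  | zero =>
    intro ℓ r hk hF
    obtain ⟨hla, har, ha1, han⟩ := fixed_elem_bounds hF
    exfalso
    omega
  | succ n ih =>
    intro ℓ r hk hF
    by_cases hmin : ∃ ℓ' r', IsFixedInterval T P w a ℓ' r' ∧ IntervalSsubset (ℓ', r') (ℓ, r)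
    · obtain ⟨ℓ', r', hF', hss⟩ := hmin
      have hss1 : ℓ ≤ ℓ' := hss.1
      have hss2 : r' ≤ r := hss.2.1
      have hss3 : (ℓ', r') ≠ (ℓ, r) := hss.2.2
      obtain ⟨hla', har', ha1', han'⟩ := fixed_elem_bounds hF'
      have hne : ℓ < ℓ' ∨ r' < r := by
        rcases Nat.lt_or_ge ℓ ℓ' with hc | hc
        · exact Or.inl hc
        · rcases Nat.lt_or_ge r' r with hc' | hc'
          · exact Or.inr hc'
          · exfalso
            apply hss3
            rw [show ℓ' = ℓ by omega, show r' = r by omega]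
      have hdec : r' + (T.length - ℓ') ≤ n := by omega
      obtain ⟨ℓ'', r'', hm, hd1, hd2⟩ := ih ℓ' r' hdec hF'
      exact ⟨ℓ'', r'', hm, le_trans hss1 hd1, le_trans hd2 hss2⟩
    · exact ⟨ℓ, r, ⟨hF, hmin⟩, le_refl _, le_refl _⟩

lemma mfi_eq {T P : List ℤ} (hT : T.Nodup) {w a ℓ r : ℕ}
    (h : IsMinFixedInterval T P w a ℓ r) :
    mfiL T P w a = (ℓ : WithBot ℕ) ∧ mfiR T P w a = (r : WithTop ℕ) := by
  have hex : ∃ ℓ' r', IsMinFixedInterval T P w a ℓ' r' := ⟨ℓ, r, h⟩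
  have hspec := hex.choose_spec.choose_spec
  have huni := minfixed_unique hT hspec h
  constructor
  · rw [mfiL, dif_pos hex, huni.1]
  · rw [mfiR, dif_pos hex, huni.2]

end Helpers5


/-- If `v` has a left child `v.L = u` in `CT(P)` and
`mfi(v,i) = [ℓ, r] ≠ [-∞,∞]`, then there exists an index `j` with `ℓ ≤ j ≤ i-1` such that
`T[i] < T[j]`, `R(v.L, j) < i`, and `ℓ ≤ L(v.L, j)`; in particular,
`mfi(v.L, j) ≠ [-∞,∞]`. -/
theorem exists_left_witness
    (T P : List ℤ) (hT : T.Nodup) (hP : P.Nodup)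
    (hm : 1 ≤ P.length) (hmn : P.length ≤ T.length)
    (v i : ℕ) (hv : 1 ≤ v ∧ v ≤ P.length) (hi : 1 ≤ i ∧ i ≤ T.length)
    (u : ℕ) (hu : leftChild P v = some u) (ℓ r : ℕ)
    (h : IsMinFixedInterval T P v i ℓ r) :
    ∃ j, ℓ ≤ j ∧ j ≤ i - 1 ∧ val T i < val T j ∧
      mfiR T P u j < (i : WithTop ℕ) ∧ (ℓ : WithBot ℕ) ≤ mfiL T P u j ∧
      ∃ ℓ' r', IsMinFixedInterval T P u j ℓ' r' := by
  obtain ⟨hFI, hminimal⟩ := h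
  obtain ⟨hl1, hrn, I, hIsub, hiI, hIbnd, hICT, hival⟩ := hFI
  obtain ⟨hIlen, hIsort, hIrange⟩ := hIsub
  obtain ⟨hPulen, Y, hPnode⟩ := Pside hP hv.1 hv.2 hu
  obtain ⟨hdec, hltk, _⟩ := seqAt_split hT hIsort hIrange hiI hival
  set k := I.idxOf i with hk
  set L := I.take k with hL
  have hCT2 : BTree.node (CT (seqAt T L)) (CT (seqAt T (I.drop (k + 1))))
      = BTree.node (CT (Psub P u)) Y := by
    rw [← hdec, hICT, hPnode]
  have hCL : CT (seqAt T L) = CT (Psub P u) :=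
    (BTree.node.injEq _ _ _ _ ▸ hCT2).1
  have hLlen : L.length = (Psub P u).length := by
    have h0 := length_eq_of_CT_eq hCL
    rwa [seqAt_length] at h0
  have hLne : L ≠ [] := by
    intro hcon
    rw [hcon] at hLlen
    simp at hLlen
    omega
  have hseqLne : seqAt T L ≠ [] := by
    simp only [seqAt, ne_eq, List.map_eq_nil_iff]
    exact hLne
  obtain ⟨j, hjL, hjval⟩ := List.mem_map.mp (minval_mem hseqLne)
  have hjI : j ∈ I := List.mem_of_mem_take hjL
  have hji : j < i := hltk j hjL
  have hjb := hIbnd j hjI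
  have hjr := hIrange j hjI
  have hvij : val T i < val T j := by
    have h1 : val T j ∈ seqAt T I := List.mem_map.mpr ⟨j, hjI, rfl⟩
    have h2 := minval_le h1
    rw [← hival] at h2
    exact lt_of_le_of_ne h2 (val_inj hT hi.1 hi.2 hjr.1 hjr.2 (by omega))
  have hFIuj : IsFixedInterval T P u j ℓ (i - 1) := by
    refine ⟨hl1, by omega, L,
      ⟨hLlen, hIsort.sublist (List.take_sublist _ _),
        fun x hx => hIrange x (List.mem_of_mem_take hx)⟩, hjL, ?_, hCL, hjval⟩
    intro x hx
    have hxi := hltk x hx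
    exact ⟨(hIbnd x (List.mem_of_mem_take hx)).1, by omega⟩
  obtain ⟨ℓ2, r2, hm2, hd1, hd2⟩ :=
    exists_minfixed_of_fixed ((i - 1) + (T.length - ℓ)) ℓ (i - 1) (le_refl _) hFIuj
  obtain ⟨hmfiL, hmfiR⟩ := mfi_eq hT hm2
  refine ⟨j, hjb.1, by omega, hvij, ?_, ?_, ℓ2, r2, hm2⟩
  · rw [hmfiR]
    exact WithTop.coe_lt_coe.mpr (show r2 < i by omega)
  · rw [hmfiL]
    exact WithBot.coe_le_coe.mpr hd1
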